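/- Let E be a normed space, let F be a quasi-complete Hausdorff locally convex space, and let 𝔓 be a cone property of bounded subsets of E. Then the set M := {T ∈ L(E,F) : T(C) is relatively compact in F whenever C is a bounded subset of E having 𝔓} is a closed linear subspace of L(E,F) endowed with the topology of uniform convergence on bounded sets. -/

import Mathlib

open Filter Topology Bornology Pointwise

/-- Let `E` be a normed space, `F` a quasi-complete Hausdorff locally convex space, and `P` a
cone property of bounded subsets of `E`. Then the set of continuous linear operators sending
subsets of `E` having `P` onto relatively compact subsets of `F` is a closed linear subspace
of `L(E,F)` with the topology of uniform convergence on bounded sets (the canonical topology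
on `E →L[ℝ] F`). -/
theorem stmt1 {E : Type*} [NormedAddCommGroup E] [NormedSpace ℝ E]
    {F : Type*} [AddCommGroup F] [Module ℝ F] [UniformSpace F]
    [IsUniformAddGroup F] [ContinuousSMul ℝ F] [LocallyConvexSpace ℝ F] [T2Space F]
    (hqc : ∀ s : Set F, IsVonNBounded ℝ s → IsClosed s → IsComplete s)
    (P : Set E → Prop)
    (hcone : ∀ (C : Set E) (r : ℝ), 0 < r → P C → P (r • C)) :
    IsClosed {T : E →L[ℝ] F | ∀ C : Set E, IsBounded C → P C →
        IsCompact (closure (T '' C))} ∧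
      (0 : E →L[ℝ] F) ∈ {T : E →L[ℝ] F | ∀ C : Set E, IsBounded C → P C →
        IsCompact (closure (T '' C))} ∧
      (∀ T₁ ∈ {T : E →L[ℝ] F | ∀ C : Set E, IsBounded C → P C →
          IsCompact (closure (T '' C))},
        ∀ T₂ ∈ {T : E →L[ℝ] F | ∀ C : Set E, IsBounded C → P C →
          IsCompact (closure (T '' C))},
        T₁ + T₂ ∈ {T : E →L[ℝ] F | ∀ C : Set E, IsBounded C → P C →
          IsCompact (closure (T '' C))}) ∧
      (∀ (c : ℝ), ∀ T₁ ∈ {T : E →L[ℝ] F | ∀ C : Set E, IsBounded C → P C →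
          IsCompact (closure (T '' C))},
        c • T₁ ∈ {T : E →L[ℝ] F | ∀ C : Set E, IsBounded C → P C →
          IsCompact (closure (T '' C))}) := by
  refine ⟨?_, ?_, ?_, ?_⟩
  · -- closedness
    refine isClosed_of_closure_subset ?_
    intro T hT C hC hPC
    have htb : TotallyBounded (T '' C) := by
      rw [totallyBounded_iff_subset_finite_iUnion_nhds_zero]
      intro U hU
      rcases exists_nhds_zero_half hU with ⟨V, hV, hVU⟩
      rw [mem_closure_iff_nhds_zero] at hT
      rcases hT { f : E →L[ℝ] F | ∀ x ∈ (C, -V).1, f x ∈ (C, -V).2 }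
          (ContinuousLinearMap.hasBasis_nhds_zero.mem_of_mem
            (i := (C, -V)) ⟨(NormedSpace.isVonNBounded_iff ℝ).mpr hC, neg_mem_nhds_zero F hV⟩) with
        ⟨S, hS, hTS⟩
      have hStb : TotallyBounded (S '' C) := (hS C hC hPC).totallyBounded.subset subset_closure
      rcases totallyBounded_iff_subset_finite_iUnion_nhds_zero.mp hStb V hV with ⟨t, ht, hSt⟩
      refine ⟨t, ht, ?_⟩
      rintro _ ⟨x, hx, rfl⟩
      rcases Set.mem_iUnion₂.mp (hSt ⟨x, hx, rfl⟩) with ⟨y, hy, hyx⟩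
      refine Set.mem_iUnion₂.mpr ⟨y, hy, ?_⟩
      rw [Set.mem_vadd_set_iff_neg_vadd_mem, vadd_eq_add, neg_add_eq_sub] at hyx ⊢
      have h1 : (S - T) x ∈ -V := hTS x hx
      have h2 : T x - y = (S x - y) + -((S - T) x) := by
        rw [ContinuousLinearMap.sub_apply]; abel
      rw [h2]
      have h3 : -(S - T) x ∈ V := by
        rcases Set.mem_neg.mp h1 with h1'
        simpa using h1'
      exact hVU _ hyx _ h3
    have hvb : IsVonNBounded ℝ (closure (T '' C)) := htb.closure.isVonNBounded ℝ
    exact isCompact_iff_totallyBounded_isComplete.mpr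
      ⟨htb.closure, hqc _ hvb isClosed_closure⟩
  · -- zero
    intro C _ _
    have h : (0 : E →L[ℝ] F) '' C ⊆ {0} := by
      rintro _ ⟨x, _, rfl⟩; simp
    have : closure ((0 : E →L[ℝ] F) '' C) ⊆ {0} :=
      closure_minimal h isClosed_singleton
    exact ((Set.finite_singleton (0 : F)).subset this).isCompact
  · -- add
    intro T₁ h₁ T₂ h₂ C hC hPC
    have hK : IsCompact (closure (T₁ '' C) + closure (T₂ '' C)) :=
      (h₁ C hC hPC).add (h₂ C hC hPC)
    have hsub : (T₁ + T₂) '' C ⊆ closure (T₁ '' C) + closure (T₂ '' C) := by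
      rintro _ ⟨x, hx, rfl⟩
      exact Set.add_mem_add (subset_closure ⟨x, hx, rfl⟩) (subset_closure ⟨x, hx, rfl⟩)
    exact hK.of_isClosed_subset isClosed_closure
      (closure_minimal hsub hK.isClosed)
  · -- smul
    intro c T₁ h₁ C hC hPC
    have hK : IsCompact ((fun y : F => c • y) '' closure (T₁ '' C)) :=
      (h₁ C hC hPC).image (continuous_const_smul c)
    have hsub : (c • T₁) '' C ⊆ (fun y : F => c • y) '' closure (T₁ '' C) := by
      rintro _ ⟨x, hx, rfl⟩
      exact ⟨T₁ x, subset_closure ⟨x, hx, rfl⟩, rfl⟩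
    exact hK.of_isClosed_subset isClosed_closure
      (closure_minimal hsub hK.isClosed)
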